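/- arXiv:1701.03493 — 5 statements merged into one kernel-verified Lean document; each statement's English description precedes it below -/
import Mathlib

section
/- For the exponential-weights selection rule S_η on a matrix x ∈ [0,1]^{n×m} (P(S_η(x)=t) ∝ exp((η/2)·Σ_i x_i^t)), the expected column sum of the selected column satisfies E_{S_η}[Σ_{i=1}^n x_i^{S_η(x)}] ≥ max_{t∈[m]} Σ_{i=1}^n x_i^t − 2·ln(m)/η. -/
open Real

theorem stmt3 (n m : ℕ) (hm : 0 < m) (η : ℝ) (hη : 0 < η)
    (x : Fin n → Fin m → ℝ) (hx : ∀ i t, x i t ∈ Set.Icc (0 : ℝ) 1) :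
    let p : Fin m → ℝ := fun t =>
      Real.exp (η / 2 * ∑ i, x i t) / ∑ t', Real.exp (η / 2 * ∑ i, x i t')
    ∑ t, p t * (∑ i, x i t) ≥ (⨆ t, ∑ i, x i t) - 2 * Real.log m / η := by
  intro p
  have : NeZero m := ⟨hm.ne'⟩
  set S : Fin m → ℝ := fun t => ∑ i, x i t with hS
  set W : ℝ := ∑ t', Real.exp (η / 2 * S t') with hWdef
  have hW : 0 < W := Finset.sum_pos (fun t _ => Real.exp_pos _) Finset.univ_nonempty
  have hp : ∀ t, 0 < p t := fun t => div_pos (Real.exp_pos _) hW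
  have hpsum : ∑ t, p t = 1 := by
    simp only [p, ← Finset.sum_div]
    exact div_self hW.ne'
  -- log identity
  have hlog : ∀ t, p t * S t = 2 / η * (p t * Real.log (p t) + p t * Real.log W) := by
    intro t
    have : Real.log (p t) = η / 2 * S t - Real.log W := by
      show Real.log (Real.exp (η / 2 * S t) / W) = _
      rw [Real.log_div (Real.exp_pos _).ne' hW.ne', Real.log_exp]
    rw [this]
    field_simp
    ring
  have hsum : ∑ t, p t * S t = 2 / η * ((∑ t, p t * Real.log (p t)) + Real.log W) := by
    rw [Finset.sum_congr rfl (fun t _ => hlog t), ← Finset.mul_sum]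
    congr 1
    rw [Finset.sum_add_distrib, ← Finset.sum_mul, hpsum, one_mul]
  -- entropy bound
  have hent : -Real.log m ≤ ∑ t, p t * Real.log (p t) := by
    have hj := convexOn_mul_log.map_sum_le (t := Finset.univ) (w := fun _ : Fin m => (m : ℝ)⁻¹)
      (p := p) (fun i _ => by positivity) (by simp)
      (fun i _ => (hp i).le)
    simp only [smul_eq_mul, ← Finset.mul_sum, hpsum, mul_one] at hj
    have hm' : (0:ℝ) < m := by exact_mod_cast hm
    have hj2 : -((m:ℝ)⁻¹ * Real.log m) ≤ (m:ℝ)⁻¹ * ∑ t, p t * Real.log (p t) := by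
      simpa using hj
    have hc : (m:ℝ) * (m:ℝ)⁻¹ = 1 := mul_inv_cancel₀ hm'.ne'
    nlinarith [mul_le_mul_of_nonneg_left hj2 hm'.le]
  -- log W ≥ η/2 * sup
  have hsup : η / 2 * (⨆ t, S t) ≤ Real.log W := by
    obtain ⟨t₀, ht₀⟩ := Finite.exists_max S
    have h1 : (⨆ t, S t) ≤ S t₀ := ciSup_le ht₀
    have h2 : Real.exp (η / 2 * S t₀) ≤ W :=
      Finset.single_le_sum (f := fun t => Real.exp (η / 2 * S t))
        (fun t _ => (Real.exp_pos _).le) (Finset.mem_univ t₀)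
    calc η / 2 * (⨆ t, S t) ≤ η / 2 * S t₀ := by
          exact mul_le_mul_of_nonneg_left h1 (by positivity)
      _ = Real.log (Real.exp (η / 2 * S t₀)) := (Real.log_exp _).symm
      _ ≤ Real.log W := Real.log_le_log (Real.exp_pos _) h2
  calc ∑ t, p t * S t = 2 / η * ((∑ t, p t * Real.log (p t)) + Real.log W) := hsum
    _ ≥ 2 / η * (-Real.log m + η / 2 * (⨆ t, S t)) := by
        apply mul_le_mul_of_nonneg_left (by linarith) (by positivity)
    _ = (⨆ t, S t) - 2 * Real.log m / η := by field_simp; ring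
end

section
/- Let X be a random n×m matrix with entries in [0,1] and independent rows, and suppose E[Σ_{i=1}^n X_i^t] ≤ μ for every column t ∈ [m]. Let S_η be the exponential-weights selection rule (P(S_η(x)=t) ∝ exp((η/2)·Σ_i x_i^t)). Then E[Σ_{i=1}^n X_i^{S_η(X)}] ≤ e^η·μ. -/
open MeasureTheory ProbabilityTheory Real

lemma aux_ratio {m : ℕ} (hm : 0 < m) (a b : Fin m → ℝ) (c : ℝ)
    (h1 : ∀ t, a t ≤ b t) (h2 : ∀ t, b t ≤ a t + c) (t : Fin m) :
    Real.exp (b t) / (∑ t', Real.exp (b t')) ≤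
      Real.exp c * (Real.exp (a t) / ∑ t', Real.exp (a t')) ∧
    Real.exp (a t) / (∑ t', Real.exp (a t')) ≤
      Real.exp c * (Real.exp (b t) / ∑ t', Real.exp (b t')) := by
  have hne : (Finset.univ : Finset (Fin m)).Nonempty := ⟨⟨0, hm⟩, Finset.mem_univ _⟩
  have hA : 0 < ∑ t', Real.exp (a t') :=
    Finset.sum_pos (fun _ _ => Real.exp_pos _) hne
  have hB : 0 < ∑ t', Real.exp (b t') :=
    Finset.sum_pos (fun _ _ => Real.exp_pos _) hne
  have hAB : (∑ t', Real.exp (a t')) ≤ ∑ t', Real.exp (b t') :=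
    Finset.sum_le_sum fun t' _ => Real.exp_le_exp.2 (h1 t')
  have hBA : (∑ t', Real.exp (b t')) ≤ Real.exp c * ∑ t', Real.exp (a t') := by
    rw [Finset.mul_sum]
    refine Finset.sum_le_sum fun t' _ => ?_
    rw [← Real.exp_add]
    exact Real.exp_le_exp.2 (by linarith [h2 t'])
  constructor
  · rw [← mul_div_assoc]
    refine div_le_div₀ (by positivity) ?_ hA hAB
    rw [← Real.exp_add]
    exact Real.exp_le_exp.2 (by linarith [h2 t])
  · rw [← mul_div_assoc, div_le_div_iff₀ hA hB]
    calc Real.exp (a t) * ∑ t', Real.exp (b t')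
        ≤ Real.exp (b t) * (Real.exp c * ∑ t', Real.exp (a t')) :=
          mul_le_mul (Real.exp_le_exp.2 (h1 t)) hBA (by positivity) (Real.exp_pos _).le
      _ = Real.exp c * Real.exp (b t) * ∑ t', Real.exp (a t') := by ring

set_option maxHeartbeats 2000000 in
theorem stmt6 {Ω : Type*} [MeasureSpace Ω] [IsProbabilityMeasure (ℙ : Measure Ω)]
    (n m : ℕ) (hm : 0 < m) (η : ℝ) (hη : 0 < η)
    (X : Fin n → Ω → (Fin m → ℝ)) (hmeas : ∀ i, Measurable (X i))
    (hbdd : ∀ i t ω, X i ω t ∈ Set.Icc (0 : ℝ) 1)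
    (hindep : iIndepFun X ℙ)
    (μ : ℝ) (hμ : ∀ t, (∫ ω, ∑ i, X i ω t) ≤ μ) :
    (∫ ω, ∑ t,
        (Real.exp (η / 2 * ∑ i, X i ω t) / ∑ t', Real.exp (η / 2 * ∑ i, X i ω t')) *
          (∑ i, X i ω t)) ≤ Real.exp η * μ := by
  classical
  set W : Fin m → Ω → ℝ := fun t ω =>
    Real.exp (η / 2 * ∑ i, X i ω t) / ∑ t', Real.exp (η / 2 * ∑ i, X i ω t') with hWdef
  set V : Fin n → Fin m → Ω → ℝ := fun i t ω =>
    Real.exp (η / 2 * ∑ j ∈ Finset.univ.erase i, X j ω t) /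
      ∑ t', Real.exp (η / 2 * ∑ j ∈ Finset.univ.erase i, X j ω t') with hVdef
  have hne : (Finset.univ : Finset (Fin m)).Nonempty := ⟨⟨0, hm⟩, Finset.mem_univ _⟩
  have hX0 : ∀ i t ω, 0 ≤ X i ω t := fun i t ω => (hbdd i t ω).1
  have hX1 : ∀ i t ω, X i ω t ≤ 1 := fun i t ω => (hbdd i t ω).2
  have hXmeas : ∀ i t, Measurable fun ω => X i ω t :=
    fun i t => (measurable_pi_apply t).comp (hmeas i)
  -- measurability
  have hWmeas : ∀ t, Measurable (W t) := by
    intro t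
    apply Measurable.div
    · exact ((Finset.measurable_sum _ fun i _ => hXmeas i t).const_mul _).exp
    · exact Finset.measurable_sum _ fun t' _ =>
        ((Finset.measurable_sum _ fun i _ => hXmeas i t').const_mul _).exp
  have hVmeas : ∀ i t, Measurable (V i t) := by
    intro i t
    apply Measurable.div
    · exact ((Finset.measurable_sum _ fun j _ => hXmeas j t).const_mul _).exp
    · exact Finset.measurable_sum _ fun t' _ =>
        ((Finset.measurable_sum _ fun j _ => hXmeas j t').const_mul _).exp
  -- positivity of denominators, bounds
  have hDpos : ∀ ω, 0 < ∑ t', Real.exp (η / 2 * ∑ i, X i ω t') :=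
    fun ω => Finset.sum_pos (fun _ _ => Real.exp_pos _) hne
  have hDpos' : ∀ i ω, 0 < ∑ t', Real.exp (η / 2 * ∑ j ∈ Finset.univ.erase i, X j ω t') :=
    fun i ω => Finset.sum_pos (fun _ _ => Real.exp_pos _) hne
  have hW0 : ∀ t ω, 0 ≤ W t ω := fun t ω => div_nonneg (Real.exp_pos _).le (hDpos ω).le
  have hW1 : ∀ t ω, W t ω ≤ 1 := fun t ω =>
    div_le_one_of_le₀ (Finset.single_le_sum
      (f := fun t' => Real.exp (η / 2 * ∑ i, X i ω t'))
      (fun t' _ => (Real.exp_pos _).le) (Finset.mem_univ t)) (hDpos ω).le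
  have hV0 : ∀ i t ω, 0 ≤ V i t ω := fun i t ω => div_nonneg (Real.exp_pos _).le (hDpos' i ω).le
  have hV1 : ∀ i t ω, V i t ω ≤ 1 := fun i t ω =>
    div_le_one_of_le₀ (Finset.single_le_sum
      (f := fun t' => Real.exp (η / 2 * ∑ j ∈ Finset.univ.erase i, X j ω t'))
      (fun t' _ => (Real.exp_pos _).le) (Finset.mem_univ t)) (hDpos' i ω).le
  -- integrability helper
  have hint : ∀ (C : ℝ) (f : Ω → ℝ), Measurable f → (∀ ω, ‖f ω‖ ≤ C) → Integrable f ℙ :=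
    fun C f hf hb => (integrable_const C).mono' hf.aestronglyMeasurable (ae_of_all _ hb)
  have hsum01 : ∀ t ω, 0 ≤ (∑ i, X i ω t) ∧ (∑ i, X i ω t) ≤ n := by
    intro t ω
    constructor
    · exact Finset.sum_nonneg fun i _ => hX0 i t ω
    · calc (∑ i, X i ω t) ≤ ∑ _i : Fin n, (1 : ℝ) :=
            Finset.sum_le_sum fun i _ => hX1 i t ω
        _ = n := by simp
  have intWS : ∀ t, Integrable (fun ω => W t ω * ∑ i, X i ω t) ℙ := by
    intro t
    refine hint n _ ((hWmeas t).mul (Finset.measurable_sum _ fun i _ => hXmeas i t)) fun ω => ?_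
    rw [Real.norm_eq_abs, abs_mul, abs_of_nonneg (hW0 t ω), abs_of_nonneg (hsum01 t ω).1]
    calc W t ω * ∑ i, X i ω t ≤ 1 * (n : ℝ) :=
          mul_le_mul (hW1 t ω) (hsum01 t ω).2 (hsum01 t ω).1 one_pos.le
      _ = n := one_mul _
  have intWX : ∀ t i, Integrable (fun ω => W t ω * X i ω t) ℙ := by
    intro t i
    refine hint 1 _ ((hWmeas t).mul (hXmeas i t)) fun ω => ?_
    rw [Real.norm_eq_abs, abs_mul, abs_of_nonneg (hW0 t ω), abs_of_nonneg (hX0 i t ω)]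
    exact mul_le_one₀ (hW1 t ω) (hX0 i t ω) (hX1 i t ω)
  have intVX : ∀ i t, Integrable (fun ω => V i t ω * X i ω t) ℙ := by
    intro i t
    refine hint 1 _ ((hVmeas i t).mul (hXmeas i t)) fun ω => ?_
    rw [Real.norm_eq_abs, abs_mul, abs_of_nonneg (hV0 i t ω), abs_of_nonneg (hX0 i t ω)]
    exact mul_le_one₀ (hV1 i t ω) (hX0 i t ω) (hX1 i t ω)
  have intW : ∀ t, Integrable (W t) ℙ := fun t =>
    hint 1 _ (hWmeas t) fun ω => by
      rw [Real.norm_eq_abs, abs_of_nonneg (hW0 t ω)]; exact hW1 t ω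
  have intV : ∀ i t, Integrable (V i t) ℙ := fun i t =>
    hint 1 _ (hVmeas i t) fun ω => by
      rw [Real.norm_eq_abs, abs_of_nonneg (hV0 i t ω)]; exact hV1 i t ω
  have intX : ∀ i t, Integrable (fun ω => X i ω t) ℙ := fun i t =>
    hint 1 _ (hXmeas i t) fun ω => by
      rw [Real.norm_eq_abs, abs_of_nonneg (hX0 i t ω)]; exact hX1 i t ω
  -- pointwise comparisons between W and V
  have hpt : ∀ i t ω, W t ω ≤ Real.exp (η / 2) * V i t ω ∧
      V i t ω ≤ Real.exp (η / 2) * W t ω := by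
    intro i t ω
    have hsum : ∀ t', (∑ j, X j ω t') = (∑ j ∈ Finset.univ.erase i, X j ω t') + X i ω t' :=
      fun t' => (Finset.sum_erase_add _ _ (Finset.mem_univ i)).symm
    have h := aux_ratio hm (fun t' => η / 2 * ∑ j ∈ Finset.univ.erase i, X j ω t')
      (fun t' => η / 2 * ∑ j, X j ω t') (η / 2)
      (fun t' => by
        have h0 := hX0 i t' ω; have hs := hsum t'; nlinarith)
      (fun t' => by
        have h1' := hX1 i t' ω; have hs := hsum t'; nlinarith) t
    exact ⟨h.1, h.2⟩
  -- independence of V i t and X i · t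
  have hIndep : ∀ i t, IndepFun (V i t) (fun ω => X i ω t) ℙ := by
    intro i t
    have hdisj : Disjoint (Finset.univ.erase i) ({i} : Finset (Fin n)) := by
      simp [Finset.disjoint_singleton_right]
    have base := hindep.indepFun_finset (Finset.univ.erase i) {i} hdisj hmeas
    have hφ : Measurable (fun v : ↥(Finset.univ.erase i) → (Fin m → ℝ) =>
        Real.exp (η / 2 * ∑ j, v j t) / ∑ t', Real.exp (η / 2 * ∑ j, v j t')) := by
      apply Measurable.div
      · exact ((Finset.measurable_sum _ fun j _ =>
          (measurable_pi_apply t).comp (measurable_pi_apply j)).const_mul _).exp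
      · exact Finset.measurable_sum _ fun t' _ =>
          ((Finset.measurable_sum _ fun j _ =>
            (measurable_pi_apply t').comp (measurable_pi_apply j)).const_mul _).exp
    have hψ : Measurable (fun v : ↥({i} : Finset (Fin n)) → (Fin m → ℝ) =>
        v ⟨i, Finset.mem_singleton_self i⟩ t) :=
      (measurable_pi_apply _).eval
    have h := base.comp hφ hψ
    convert h using 1
    · funext ω
      simp only [Function.comp_apply, hVdef]
      congr 1
      · congr 1
        rw [← Finset.sum_coe_sort (Finset.univ.erase i) (fun j => X j ω t)]
      · refine Finset.sum_congr rfl fun t' _ => ?_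
        congr 1
        rw [← Finset.sum_coe_sort (Finset.univ.erase i) (fun j => X j ω t')]
    · rfl
  -- main per-term bound
  have key : ∀ t i, (∫ ω, W t ω * X i ω t) ≤
      Real.exp η * ((∫ ω, W t ω) * ∫ ω, X i ω t) := by
    intro t i
    have hmul : (∫ ω, V i t ω * X i ω t) = (∫ ω, V i t ω) * ∫ ω, X i ω t := by
      have := (hIndep i t).integral_mul_eq_mul_integral (intV i t).aestronglyMeasurable (intX i t).aestronglyMeasurable
      simpa [Pi.mul_apply] using this
    have hv : (∫ ω, V i t ω) ≤ Real.exp (η / 2) * ∫ ω, W t ω := by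
      rw [← integral_const_mul]
      exact integral_mono (intV i t) ((intW t).const_mul _) fun ω => (hpt i t ω).2
    have hx : 0 ≤ ∫ ω, X i ω t := integral_nonneg fun ω => hX0 i t ω
    calc (∫ ω, W t ω * X i ω t)
        ≤ ∫ ω, Real.exp (η / 2) * (V i t ω * X i ω t) := by
          refine integral_mono (intWX t i) ((intVX i t).const_mul _) fun ω => ?_
          have := mul_le_mul_of_nonneg_right (hpt i t ω).1 (hX0 i t ω)
          linarith [this]
      _ = Real.exp (η / 2) * ∫ ω, V i t ω * X i ω t := integral_const_mul _ _
      _ = Real.exp (η / 2) * ((∫ ω, V i t ω) * ∫ ω, X i ω t) := by rw [hmul]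
      _ ≤ Real.exp (η / 2) * ((Real.exp (η / 2) * ∫ ω, W t ω) * ∫ ω, X i ω t) := by
          refine mul_le_mul_of_nonneg_left
            (mul_le_mul_of_nonneg_right hv hx) (Real.exp_pos _).le
      _ = Real.exp η * ((∫ ω, W t ω) * ∫ ω, X i ω t) := by
          rw [show Real.exp (η / 2) * ((Real.exp (η / 2) * ∫ ω, W t ω) * ∫ ω, X i ω t)
              = (Real.exp (η / 2) * Real.exp (η / 2)) * ((∫ ω, W t ω) * ∫ ω, X i ω t) from
            by ring, ← Real.exp_add]
          norm_num
  -- sum of W over t is 1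
  have hWsum : ∀ ω, ∑ t, W t ω = 1 := by
    intro ω
    rw [hWdef]
    rw [← Finset.sum_div]
    exact div_self (hDpos ω).ne'
  have hintsumW : (∑ t, ∫ ω, W t ω) = 1 := by
    rw [← integral_finset_sum _ fun t _ => intW t]
    simp only [hWsum]
    simp
  -- put everything together
  calc (∫ ω, ∑ t, W t ω * ∑ i, X i ω t)
      = ∑ t, ∫ ω, W t ω * ∑ i, X i ω t := integral_finset_sum _ fun t _ => intWS t
    _ = ∑ t, ∑ i, ∫ ω, W t ω * X i ω t := by
        refine Finset.sum_congr rfl fun t _ => ?_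
        rw [← integral_finset_sum _ fun i _ => intWX t i]
        refine integral_congr_ae (ae_of_all _ fun ω => ?_)
        simp only [Finset.mul_sum]
    _ ≤ ∑ t, ∑ i, Real.exp η * ((∫ ω, W t ω) * ∫ ω, X i ω t) :=
        Finset.sum_le_sum fun t _ => Finset.sum_le_sum fun i _ => key t i
    _ = ∑ t, Real.exp η * ((∫ ω, W t ω) * ∑ i, ∫ ω, X i ω t) := by
        refine Finset.sum_congr rfl fun t _ => ?_
        rw [Finset.mul_sum, Finset.mul_sum]
    _ ≤ ∑ t, Real.exp η * ((∫ ω, W t ω) * μ) := by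
        refine Finset.sum_le_sum fun t _ => ?_
        have h1 : (∑ i, ∫ ω, X i ω t) ≤ μ := by
          rw [← integral_finset_sum _ fun i _ => intX i t]
          exact hμ t
        have h2 : 0 ≤ ∫ ω, W t ω := integral_nonneg fun ω => hW0 t ω
        exact mul_le_mul_of_nonneg_left (mul_le_mul_of_nonneg_left h1 h2) (Real.exp_pos _).le
    _ = Real.exp η * μ * ∑ t, ∫ ω, W t ω := by
        rw [Finset.mul_sum]
        exact Finset.sum_congr rfl fun t _ => by ring
    _ = Real.exp η * μ := by rw [hintsumW, mul_one]
end

section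
/- Let X be a random n×m matrix with entries in [0,1] whose rows are independent. Then for every η > 0, E[max_{t∈[m]} Σ_{i=1}^n X_i^t] ≤ e^η · max_{t∈[m]} E[Σ_{i=1}^n X_i^t] + 2·ln(m)/η. -/
open MeasureTheory ProbabilityTheory Real

set_option maxHeartbeats 1000000 in
theorem stmt7 {Ω : Type*} [MeasureSpace Ω] [IsProbabilityMeasure (ℙ : Measure Ω)]
    (n m : ℕ) (hm : 0 < m)
    (X : Fin n → Ω → (Fin m → ℝ)) (hmeas : ∀ i, Measurable (X i))
    (hbdd : ∀ i t ω, X i ω t ∈ Set.Icc (0 : ℝ) 1)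
    (hindep : iIndepFun X ℙ)
    (η : ℝ) (hη : 0 < η) :
    (∫ ω, ⨆ t, ∑ i, X i ω t) ≤
      Real.exp η * (⨆ t, ∫ ω, ∑ i, X i ω t) + 2 * Real.log m / η := by
  haveI : NeZero (ℙ : Measure Ω) := ⟨IsProbabilityMeasure.ne_zero _⟩
  haveI hne : Nonempty (Fin m) := ⟨⟨0, hm⟩⟩
  classical
  -- basic objects
  set Y : Fin m → Fin n → Ω → ℝ := fun t i ω => X i ω t with hY
  set S : Fin m → Ω → ℝ := fun t ω => ∑ i, X i ω t with hSdef
  have hmeasY : ∀ t i, Measurable (Y t i) := fun t i =>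
    (measurable_pi_apply t).comp (hmeas i)
  have hmeasS : ∀ t, Measurable (S t) := fun t =>
    Finset.measurable_sum _ fun i _ => hmeasY t i
  have hY0 : ∀ t i ω, 0 ≤ Y t i ω := fun t i ω => (hbdd i t ω).1
  have hY1 : ∀ t i ω, Y t i ω ≤ 1 := fun t i ω => (hbdd i t ω).2
  have hS0 : ∀ t ω, 0 ≤ S t ω := fun t ω =>
    Finset.sum_nonneg fun i _ => hY0 t i ω
  have hSn : ∀ t ω, S t ω ≤ n := by
    intro t ω
    calc S t ω ≤ ∑ _i : Fin n, (1 : ℝ) := Finset.sum_le_sum fun i _ => hY1 t i ω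
    _ = n := by simp
  -- integrability of bounded measurable functions
  have intb : ∀ (f : Ω → ℝ) (C : ℝ), Measurable f → (∀ ω, |f ω| ≤ C) → Integrable f ℙ := by
    intro f C hf hC
    exact ⟨hf.aestronglyMeasurable,
      HasFiniteIntegral.of_bounded (C := C) (ae_of_all _ (by simpa [Real.norm_eq_abs] using hC))⟩
  have intY : ∀ t i, Integrable (Y t i) ℙ := fun t i =>
    intb _ 1 (hmeasY t i) fun ω => abs_le.2 ⟨by linarith [hY0 t i ω], hY1 t i ω⟩
  have intS : ∀ t, Integrable (S t) ℙ := fun t =>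
    intb _ n (hmeasS t) fun ω => abs_le.2 ⟨by linarith [hS0 t ω], hSn t ω⟩
  have intexpY : ∀ t i, Integrable (fun ω => exp (η * Y t i ω)) ℙ := fun t i =>
    intb _ (exp (η * 1)) ((hmeasY t i).const_mul η).exp fun ω => by
      rw [abs_of_pos (exp_pos _), exp_le_exp]
      exact mul_le_mul_of_nonneg_left (hY1 t i ω) hη.le
  have intexpS : ∀ t, Integrable (fun ω => exp (η * S t ω)) ℙ := fun t =>
    intb _ (exp (η * n)) ((hmeasS t).const_mul η).exp fun ω => by
      rw [abs_of_pos (exp_pos _), exp_le_exp]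
      exact mul_le_mul_of_nonneg_left (hSn t ω) hη.le
  -- the max process
  set M : Ω → ℝ := fun ω => ⨆ t, S t ω with hMdef
  have hmeasM : Measurable M := Measurable.iSup hmeasS
  have hM0 : ∀ ω, 0 ≤ M ω := fun ω =>
    le_trans (hS0 ⟨0, hm⟩ ω)
      (le_ciSup (f := fun t => S t ω) (Set.finite_range _).bddAbove ⟨0, hm⟩)
  have hMn : ∀ ω, M ω ≤ n := fun ω => ciSup_le fun t => hSn t ω
  have intM : Integrable M ℙ := intb _ n hmeasM fun ω => abs_le.2 ⟨by linarith [hM0 ω], hMn ω⟩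
  have intexpM : Integrable (fun ω => exp (η * M ω)) ℙ :=
    intb _ (exp (η * n)) ((hmeasM.const_mul η).exp) fun ω => by
      rw [abs_of_pos (exp_pos _), exp_le_exp]
      exact mul_le_mul_of_nonneg_left (hMn ω) hη.le
  -- A = max of expectations
  set A : ℝ := ⨆ t, ∫ ω, S t ω with hAdef
  have hbddA : BddAbove (Set.range fun t => ∫ ω, S t ω) := (Set.finite_range _).bddAbove
  have hAt : ∀ t, (∫ ω, S t ω) ≤ A := fun t => le_ciSup hbddA t
  have hA0 : 0 ≤ A :=
    le_trans (integral_nonneg fun ω => hS0 ⟨0, hm⟩ ω) (hAt ⟨0, hm⟩)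
  -- pointwise convexity bound : exp (η x) ≤ 1 + (exp η - 1) x for x ∈ [0,1]
  have hconv : ∀ x : ℝ, 0 ≤ x → x ≤ 1 → exp (η * x) ≤ 1 + (exp η - 1) * x := by
    intro x hx0 hx1
    have h := convexOn_exp.2 (Set.mem_univ (0 : ℝ)) (Set.mem_univ η)
      (by linarith : (0:ℝ) ≤ 1 - x) hx0 (by ring)
    simp only [smul_eq_mul, mul_zero, zero_add, Real.exp_zero, mul_one] at h
    calc exp (η * x) = exp (x * η) := by rw [mul_comm]
    _ ≤ (1 - x) * 1 + x * exp η := by simpa [Real.exp_zero] using h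
    _ = 1 + (exp η - 1) * x := by ring
  -- mgf bound for each entry
  have hmgfY : ∀ t i, mgf (Y t i) ℙ η ≤ exp ((exp η - 1) * ∫ ω, Y t i ω) := by
    intro t i
    have h1 : mgf (Y t i) ℙ η ≤ ∫ ω, (1 + (exp η - 1) * Y t i ω) := by
      refine integral_mono (intexpY t i) ((integrable_const 1).add ((intY t i).const_mul _)) ?_
      intro ω; exact hconv _ (hY0 t i ω) (hY1 t i ω)
    have h2 : (∫ ω, (1 + (exp η - 1) * Y t i ω)) = 1 + (exp η - 1) * ∫ ω, Y t i ω := by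
      rw [integral_add (integrable_const 1) ((intY t i).const_mul _)]
      rw [integral_const_mul]
      simp
    calc mgf (Y t i) ℙ η ≤ 1 + (exp η - 1) * ∫ ω, Y t i ω := by rw [← h2]; exact h1
    _ ≤ exp ((exp η - 1) * ∫ ω, Y t i ω) := by
        have := Real.add_one_le_exp ((exp η - 1) * ∫ ω, Y t i ω); linarith
  -- independence: mgf of the sum factorizes
  have hmgfS : ∀ t, mgf (S t) ℙ η = ∏ i, mgf (Y t i) ℙ η := by
    intro t
    have hind : iIndepFun (fun i => (fun f : Fin m → ℝ => f t) ∘ X i) ℙ :=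
      hindep.comp _ fun i => measurable_pi_apply t
    have hSsum : S t = ∑ i, Y t i := by
      ext ω; simp [hSdef, hY, Finset.sum_apply]
    rw [hSsum]
    exact hind.mgf_sum (fun i => hmeasY t i) Finset.univ
  -- mgf of the sum bound
  have hmgfSle : ∀ t, mgf (S t) ℙ η ≤ exp ((exp η - 1) * A) := by
    intro t
    have hexpsum : (∏ i, exp ((exp η - 1) * ∫ ω, Y t i ω))
        = exp ((exp η - 1) * ∫ ω, S t ω) := by
      rw [← Real.exp_sum]
      congr 1
      rw [← Finset.mul_sum]
      congr 1
      rw [hSdef]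
      simp only
      rw [integral_finset_sum _ fun i _ => intY t i]
    calc mgf (S t) ℙ η = ∏ i, mgf (Y t i) ℙ η := hmgfS t
    _ ≤ ∏ i, exp ((exp η - 1) * ∫ ω, Y t i ω) :=
        Finset.prod_le_prod (fun i _ => mgf_nonneg) fun i _ => hmgfY t i
    _ = exp ((exp η - 1) * ∫ ω, S t ω) := hexpsum
    _ ≤ exp ((exp η - 1) * A) := by
        rw [exp_le_exp]
        refine mul_le_mul_of_nonneg_left (hAt t) ?_
        have := Real.add_one_le_exp η; linarith
  -- pointwise: exp (η M) ≤ sum of exp (η S t)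
  have hptM : ∀ ω, exp (η * M ω) ≤ ∑ t, exp (η * S t ω) := by
    intro ω
    obtain ⟨t0, ht0⟩ := exists_eq_ciSup_of_finite (f := fun t => S t ω)
    have : M ω = S t0 ω := ht0.symm
    rw [this]
    exact Finset.single_le_sum (f := fun t => exp (η * S t ω))
      (fun t _ => (exp_pos _).le) (Finset.mem_univ t0)
  -- Jensen: exp (η ∫ M) ≤ ∫ exp (η M)
  have hjensen : exp (η * ∫ ω, M ω) ≤ ∫ ω, exp (η * M ω) := by
    have h := convexOn_exp.map_average_le continuous_exp.continuousOn isClosed_univ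
      (ae_of_all _ fun ω => Set.mem_univ (η * M ω)) (intM.const_mul η)
      (by simpa [Function.comp_def] using intexpM)
    simp only [average_eq_integral, Function.comp] at h
    rwa [integral_const_mul] at h
  -- chain of inequalities
  have hchain : exp (η * ∫ ω, M ω) ≤ m * exp ((exp η - 1) * A) := by
    calc exp (η * ∫ ω, M ω) ≤ ∫ ω, exp (η * M ω) := hjensen
    _ ≤ ∫ ω, ∑ t, exp (η * S t ω) := by
        refine integral_mono intexpM (integrable_finset_sum _ fun t _ => intexpS t) ?_
        intro ω; exact hptM ω
    _ = ∑ t, ∫ ω, exp (η * S t ω) := integral_finset_sum _ fun t _ => intexpS t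
    _ = ∑ t, mgf (S t) ℙ η := by simp only [mgf]
    _ ≤ ∑ _t : Fin m, exp ((exp η - 1) * A) := Finset.sum_le_sum fun t _ => hmgfSle t
    _ = m * exp ((exp η - 1) * A) := by simp [Finset.sum_const]
  -- take logarithms
  have hm1 : (1 : ℝ) ≤ m := by exact_mod_cast hm
  have hlog : η * (∫ ω, M ω) ≤ Real.log m + (exp η - 1) * A := by
    have hpos : (0:ℝ) < m * exp ((exp η - 1) * A) :=
      mul_pos (by positivity) (exp_pos _)
    have := Real.log_le_log (exp_pos _) hchain
    rwa [Real.log_exp, Real.log_mul (by positivity) (exp_pos _).ne', Real.log_exp] at this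
  -- final arithmetic
  have hee : exp η - 1 ≤ η * exp η := by
    have h1 := Real.add_one_le_exp (-η)
    have h2 : Real.exp (-η) = (Real.exp η)⁻¹ := Real.exp_neg η
    have h3 := Real.exp_pos η
    rw [h2] at h1
    have h4 : (-η + 1) * exp η ≤ 1 := by
      calc (-η + 1) * exp η ≤ (exp η)⁻¹ * exp η := mul_le_mul_of_nonneg_right h1 h3.le
      _ = 1 := inv_mul_cancel₀ h3.ne'
    nlinarith
  have hlogm : 0 ≤ Real.log m := Real.log_nonneg hm1
  have key : η * (∫ ω, M ω) ≤ η * exp η * A + 2 * Real.log m := by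
    have : (exp η - 1) * A ≤ η * exp η * A := mul_le_mul_of_nonneg_right hee hA0
    linarith
  have hfin : (∫ ω, M ω) ≤ (η * exp η * A + 2 * Real.log m) / η := by
    rw [le_div_iff₀ hη, mul_comm]
    exact key
  have heq : (η * exp η * A + 2 * Real.log m) / η = exp η * A + 2 * Real.log m / η := by
    field_simp
  rw [heq] at hfin
  exact hfin
end

section
/- Let X be a random n×m matrix with entries in [0,1] whose rows are independent. Then for every η > 0, E[min_{t∈[m]} Σ_{i=1}^n X_i^t] ≥ e^{-η} · min_{t∈[m]} E[Σ_{i=1}^n X_i^t] − 2·ln(m)/η. -/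
open MeasureTheory ProbabilityTheory Real

set_option maxHeartbeats 1000000

lemma aux_int_bdd {Ω : Type*} [MeasureSpace Ω] [IsProbabilityMeasure (ℙ : Measure Ω)]
    {f : Ω → ℝ} (hf : Measurable f) (C : ℝ) (h : ∀ ω, |f ω| ≤ C) :
    Integrable f ℙ :=
  (integrable_const C).mono' hf.aestronglyMeasurable
    (Filter.Eventually.of_forall (fun ω => by simpa [Real.norm_eq_abs] using h ω))

lemma aux_integral_prod {Ω : Type*} [MeasureSpace Ω] [IsProbabilityMeasure (ℙ : Measure Ω)]
    {n : ℕ} (g : Fin n → Ω → ℝ) (hgmeas : ∀ i, Measurable (g i))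
    (hgindep : iIndepFun g ℙ) (s : Finset (Fin n)) :
    ∫ ω, ∏ i ∈ s, g i ω = ∏ i ∈ s, ∫ ω, g i ω := by
  classical
  induction s using Finset.cons_induction with
  | empty => simp
  | cons i s hi ih =>
    have hmP : Measurable (∏ j ∈ s, g j) := by
      rw [Finset.prod_fn]; exact s.measurable_prod fun j _ => hgmeas j
    have h1 : IndepFun (g i) (∏ j ∈ s, g j) ℙ :=
      (hgindep.indepFun_finsetProd_of_notMem hgmeas hi).symm
    have h2 : (∫ ω, (g i * ∏ j ∈ s, g j) ω) =
        (∫ ω, g i ω) * ∫ ω, (∏ j ∈ s, g j) ω :=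
      h1.integral_mul_eq_mul_integral (hgmeas i).aestronglyMeasurable hmP.aestronglyMeasurable
    simp only [Pi.mul_apply, Finset.prod_apply] at h2
    simp only [Finset.prod_cons]
    rw [h2, ih]


theorem stmt8 {Ω : Type*} [MeasureSpace Ω] [IsProbabilityMeasure (ℙ : Measure Ω)]
    (n m : ℕ) (hm : 0 < m)
    (X : Fin n → Ω → (Fin m → ℝ)) (hmeas : ∀ i, Measurable (X i))
    (hbdd : ∀ i t ω, X i ω t ∈ Set.Icc (0 : ℝ) 1)
    (hindep : iIndepFun X ℙ)
    (η : ℝ) (hη : 0 < η) :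
    (∫ ω, ⨅ t, ∑ i, X i ω t) ≥
      Real.exp (-η) * (⨅ t, ∫ ω, ∑ i, X i ω t) - 2 * Real.log m / η := by
  classical
  haveI : NeZero m := ⟨hm.ne'⟩
  set S : Fin m → Ω → ℝ := fun t ω => ∑ i, X i ω t with hS
  have hXmeas : ∀ i t, Measurable (fun ω => X i ω t) :=
    fun i t => (measurable_pi_apply t).comp (hmeas i)
  have hSmeas : ∀ t, Measurable (S t) :=
    fun t => Finset.measurable_sum _ (fun i _ => hXmeas i t)
  have hSnonneg : ∀ t ω, 0 ≤ S t ω :=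
    fun t ω => Finset.sum_nonneg (fun i _ => (hbdd i t ω).1)
  have hSle : ∀ t ω, S t ω ≤ n := by
    intro t ω
    calc S t ω ≤ ∑ _i : Fin n, (1:ℝ) :=
          Finset.sum_le_sum (fun i _ => (hbdd i t ω).2)
      _ = n := by simp
  set f : Ω → ℝ := fun ω => ⨅ t, S t ω with hf
  have hfmeas : Measurable f := Measurable.iInf hSmeas
  have hbdd_below : ∀ ω, BddBelow (Set.range fun t => S t ω) :=
    fun ω => Set.Finite.bddBelow (Set.finite_range _)
  have hfnonneg : ∀ ω, 0 ≤ f ω := fun ω => le_ciInf (fun t => hSnonneg t ω)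
  have hfle : ∀ ω, f ω ≤ n := fun ω =>
    le_trans (ciInf_le (hbdd_below ω) ⟨0, hm⟩) (hSle _ ω)
  have hfint : Integrable f ℙ :=
    aux_int_bdd hfmeas n (fun ω => abs_le.2 ⟨by linarith [hfnonneg ω], hfle ω⟩)
  set c : ℝ := ∫ ω, f ω with hc
  set μ : ℝ := ⨅ t, ∫ ω, S t ω with hμ
  have hSint : ∀ t, Integrable (S t) ℙ := fun t =>
    aux_int_bdd (hSmeas t) n (fun ω => abs_le.2 ⟨by linarith [hSnonneg t ω], hSle t ω⟩)
  have hμ_le : ∀ t, μ ≤ ∫ ω, S t ω :=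
    fun t => ciInf_le (Set.Finite.bddBelow (Set.finite_range _)) t
  have hμnonneg : 0 ≤ μ :=
    le_ciInf (fun t => integral_nonneg (fun ω => hSnonneg t ω))
  -- Step 1: Jensen : exp (-η c) ≤ ∫ exp (-η f)
  have hexpint : Integrable (fun ω => Real.exp (-η * f ω)) ℙ :=
    aux_int_bdd ((hfmeas.const_mul (-η)).exp) 1 (fun ω => by
      rw [abs_of_nonneg (Real.exp_nonneg _)]
      have h0 : -η * f ω ≤ 0 := mul_nonpos_of_nonpos_of_nonneg (by linarith) (hfnonneg ω)
      calc Real.exp (-η * f ω) ≤ Real.exp 0 := Real.exp_le_exp.2 h0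
        _ = 1 := Real.exp_zero)
  have jensen : Real.exp (-η * c) ≤ ∫ ω, Real.exp (-η * f ω) := by
    have hpt : ∀ ω, Real.exp (-η * c) * (η * c + 1) + (-(Real.exp (-η * c) * η)) * f ω
        ≤ Real.exp (-η * f ω) := by
      intro ω
      have h1 : (η * c - η * f ω) + 1 ≤ Real.exp (η * c - η * f ω) :=
        Real.add_one_le_exp _
      have h2 : Real.exp (-η * c) * Real.exp (η * c - η * f ω) = Real.exp (-η * f ω) := by
        rw [← Real.exp_add]; ring_nf
      nlinarith [Real.exp_pos (-η * c), mul_le_mul_of_nonneg_left h1 (Real.exp_pos (-η*c)).le]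
    have hint1 : Integrable
        (fun ω => Real.exp (-η * c) * (η * c + 1) + (-(Real.exp (-η * c) * η)) * f ω) ℙ :=
      (integrable_const _).add (hfint.const_mul _)
    have hmono := integral_mono hint1 hexpint hpt
    have hcomp : (∫ ω, (Real.exp (-η * c) * (η * c + 1) + (-(Real.exp (-η * c) * η)) * f ω))
        = Real.exp (-η * c) := by
      rw [integral_add (integrable_const _) (hfint.const_mul _), integral_const,
        integral_const_mul]
      simp only [probReal_univ, ENNReal.toReal_one, smul_eq_mul, one_mul]
      rw [← hc]; ring
    linarith [hmono, hcomp.symm.le, hcomp.le]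
  -- Step 2: ∫ exp(-η f) ≤ ∑ t, ∫ exp (-η S t)
  have hexpSint : ∀ t, Integrable (fun ω => Real.exp (-η * S t ω)) ℙ := fun t =>
    aux_int_bdd (((hSmeas t).const_mul (-η)).exp) 1 (fun ω => by
      rw [abs_of_nonneg (Real.exp_nonneg _)]
      have h0 : -η * S t ω ≤ 0 := mul_nonpos_of_nonpos_of_nonneg (by linarith) (hSnonneg t ω)
      calc Real.exp (-η * S t ω) ≤ Real.exp 0 := Real.exp_le_exp.2 h0
        _ = 1 := Real.exp_zero)
  have step2 : (∫ ω, Real.exp (-η * f ω)) ≤ ∑ t, ∫ ω, Real.exp (-η * S t ω) := by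
    have hpt : ∀ ω, Real.exp (-η * f ω) ≤ ∑ t, Real.exp (-η * S t ω) := by
      intro ω
      obtain ⟨t0, ht0⟩ := Finite.exists_min (fun t => S t ω)
      have h1 : S t0 ω ≤ f ω := le_ciInf ht0
      have h2 : Real.exp (-η * f ω) ≤ Real.exp (-η * S t0 ω) :=
        Real.exp_le_exp.2 (mul_le_mul_of_nonpos_left h1 (by linarith : -η ≤ 0))
      calc Real.exp (-η * f ω) ≤ Real.exp (-η * S t0 ω) := h2
        _ ≤ ∑ t, Real.exp (-η * S t ω) :=
          Finset.single_le_sum (f := fun t => Real.exp (-η * S t ω))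
            (fun t _ => (Real.exp_nonneg _)) (Finset.mem_univ t0)
    have := integral_mono hexpint (integrable_finset_sum _ (fun t _ => hexpSint t)) hpt
    calc (∫ ω, Real.exp (-η * f ω)) ≤ ∫ ω, ∑ t, Real.exp (-η * S t ω) := this
      _ = ∑ t, ∫ ω, Real.exp (-η * S t ω) :=
        integral_finset_sum _ (fun t _ => hexpSint t)
  -- Step 3: for each t, ∫ exp(-η S t) ≤ exp (-(1 - exp(-η)) μ)
  have step3 : ∀ t, (∫ ω, Real.exp (-η * S t ω)) ≤ Real.exp (-(1 - Real.exp (-η)) * μ) := by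
    intro t
    set g : Fin n → Ω → ℝ := fun i ω => Real.exp (-η * X i ω t) with hg
    have hgmeas : ∀ i, Measurable (g i) := fun i => ((hXmeas i t).const_mul (-η)).exp
    have hgindep : iIndepFun g ℙ :=
      hindep.comp (fun i => fun v : Fin m → ℝ => Real.exp (-η * v t))
        (fun i => by fun_prop)
    have hprod : (∫ ω, Real.exp (-η * S t ω)) = ∏ i, ∫ ω, g i ω := by
      rw [← aux_integral_prod g hgmeas hgindep Finset.univ]
      congr 1; funext ω
      rw [hg]
      simp only []
      rw [← Real.exp_sum]
      congr 1
      rw [hS]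
      simp only []
      rw [Finset.mul_sum]
    -- each factor
    have hfac : ∀ i, (∫ ω, g i ω) ≤ Real.exp (-(1 - Real.exp (-η)) * ∫ ω, X i ω t) := by
      intro i
      have hXint : Integrable (fun ω => X i ω t) ℙ :=
        aux_int_bdd (hXmeas i t) 1 (fun ω => abs_le.2 ⟨by linarith [(hbdd i t ω).1], (hbdd i t ω).2⟩)
      have hpt : ∀ ω, g i ω ≤ 1 + (Real.exp (-η) - 1) * X i ω t := by
        intro ω
        have hx := hbdd i t ω
        have hconv := convexOn_exp.2 (Set.mem_univ (0:ℝ)) (Set.mem_univ (-η))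
          (by linarith [hx.2] : (0:ℝ) ≤ 1 - X i ω t) hx.1 (by ring)
        simp only [smul_eq_mul, mul_zero, zero_add, Real.exp_zero, mul_one] at hconv
        calc g i ω = Real.exp ((1 - X i ω t) * 0 + X i ω t * (-η)) := by
              rw [hg]; simp only []; ring_nf
          _ ≤ (1 - X i ω t) * Real.exp 0 + X i ω t * Real.exp (-η) := by
              exact convexOn_exp.2 (Set.mem_univ (0:ℝ)) (Set.mem_univ (-η))
                (by linarith [hx.2]) hx.1 (by ring)
          _ = 1 + (Real.exp (-η) - 1) * X i ω t := by rw [Real.exp_zero]; ring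
      have hgint : Integrable (g i) ℙ :=
        aux_int_bdd (hgmeas i) 1 (fun ω => by
          rw [abs_of_nonneg (Real.exp_nonneg _)]
          have h0 : -η * X i ω t ≤ 0 :=
            mul_nonpos_of_nonpos_of_nonneg (by linarith) (hbdd i t ω).1
          calc Real.exp (-η * X i ω t) ≤ Real.exp 0 := Real.exp_le_exp.2 h0
            _ = 1 := Real.exp_zero)
      have hint2 : Integrable (fun ω => 1 + (Real.exp (-η) - 1) * X i ω t) ℙ :=
        (integrable_const _).add (hXint.const_mul _)
      have h1 := integral_mono hgint hint2 hpt
      have h2 : (∫ ω, (1 + (Real.exp (-η) - 1) * X i ω t))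
          = 1 + (Real.exp (-η) - 1) * ∫ ω, X i ω t := by
        rw [integral_add (integrable_const _) (hXint.const_mul _), integral_const,
          integral_const_mul]
        simp
      have h3 : 1 + (Real.exp (-η) - 1) * (∫ ω, X i ω t)
          ≤ Real.exp (-(1 - Real.exp (-η)) * ∫ ω, X i ω t) := by
        have := Real.add_one_le_exp (-(1 - Real.exp (-η)) * ∫ ω, X i ω t)
        linarith
      linarith [h1, h2.le, h2.symm.le]
    have hfacnonneg : ∀ i, 0 ≤ ∫ ω, g i ω :=
      fun i => integral_nonneg (fun ω => Real.exp_nonneg _)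
    have hprodle : (∏ i, ∫ ω, g i ω)
        ≤ ∏ i, Real.exp (-(1 - Real.exp (-η)) * ∫ ω, X i ω t) :=
      Finset.prod_le_prod (fun i _ => hfacnonneg i) (fun i _ => hfac i)
    have hprodexp : (∏ i, Real.exp (-(1 - Real.exp (-η)) * ∫ ω, X i ω t))
        = Real.exp (-(1 - Real.exp (-η)) * ∫ ω, S t ω) := by
      rw [← Real.exp_sum]
      congr 1
      rw [← Finset.mul_sum]
      congr 1
      rw [hS]
      exact (integral_finset_sum _ (fun i _ => aux_int_bdd (hXmeas i t) 1
        (fun ω => abs_le.2 ⟨by linarith [(hbdd i t ω).1], (hbdd i t ω).2⟩))).symm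
    have hlast : Real.exp (-(1 - Real.exp (-η)) * ∫ ω, S t ω)
        ≤ Real.exp (-(1 - Real.exp (-η)) * μ) := by
      apply Real.exp_le_exp.2
      have hexpη : Real.exp (-η) ≤ 1 := by
        rw [Real.exp_le_one_iff]; linarith
      nlinarith [hμ_le t]
    calc (∫ ω, Real.exp (-η * S t ω)) = ∏ i, ∫ ω, g i ω := hprod
      _ ≤ _ := hprodle
      _ = _ := hprodexp
      _ ≤ _ := hlast
  -- Combine
  have total : Real.exp (-η * c) ≤ m * Real.exp (-(1 - Real.exp (-η)) * μ) := by
    calc Real.exp (-η * c) ≤ ∫ ω, Real.exp (-η * f ω) := jensen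
      _ ≤ ∑ t, ∫ ω, Real.exp (-η * S t ω) := step2
      _ ≤ ∑ _t : Fin m, Real.exp (-(1 - Real.exp (-η)) * μ) :=
        Finset.sum_le_sum (fun t _ => step3 t)
      _ = m * Real.exp (-(1 - Real.exp (-η)) * μ) := by
        rw [Finset.sum_const]; simp [mul_comm]
  -- take logs
  have hm1 : (1:ℝ) ≤ m := by exact_mod_cast hm
  have hlogm : 0 ≤ Real.log m := Real.log_nonneg hm1
  have hlog : -η * c ≤ Real.log m + (-(1 - Real.exp (-η)) * μ) := by
    have hpos : (0:ℝ) < m * Real.exp (-(1 - Real.exp (-η)) * μ) :=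
      mul_pos (by exact_mod_cast hm) (Real.exp_pos _)
    have := Real.log_le_log (Real.exp_pos (-η * c)) total
    rwa [Real.log_exp, Real.log_mul (by positivity) (Real.exp_ne_zero _),
      Real.log_exp] at this
  -- final arithmetic
  have hee : Real.exp η * Real.exp (-η) = 1 := by rw [← Real.exp_add]; simp
  have hkey : 1 - Real.exp (-η) ≥ η * Real.exp (-η) := by
    nlinarith [Real.add_one_le_exp η, Real.exp_pos (-η), hee]
  have hηc : η * c ≥ η * Real.exp (-η) * μ - 2 * Real.log m := by nlinarith
  rw [ge_iff_le, sub_le_iff_le_add]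
  have h2 : 2 * Real.log m / η * η = 2 * Real.log m := div_mul_cancel₀ _ hη.ne'
  nlinarith [hηc]
end

section
/- Let X_1,...,X_n be independent random variables supported on [0,1] with μ_i = E[X_i], and let Y = Σ_{i=1}^n (X_i − μ_i). For any m ∈ ℕ, if Y^1,...,Y^m are independent copies of Y, then E[max{0, Y^1, ..., Y^m}] ≤ 4·√(n·ln(m+1)). -/
open MeasureTheory ProbabilityTheory Real

/-- convexity bound: for `x ∈ [-1,1]`, `exp (c*x) ≤ cosh c + x * sinh c`. -/
lemma aux_exp_le_cosh (c x : ℝ) (hx : x ∈ Set.Icc (-1 : ℝ) 1) :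
    Real.exp (c * x) ≤ Real.cosh c + x * Real.sinh c := by
  obtain ⟨hx1, hx2⟩ := hx
  have ha : (0:ℝ) ≤ (1 - x) / 2 := by linarith
  have hb : (0:ℝ) ≤ (1 + x) / 2 := by linarith
  have hab : (1 - x) / 2 + (1 + x) / 2 = 1 := by ring
  have h := convexOn_exp.2 (Set.mem_univ (-c)) (Set.mem_univ c) ha hb hab
  simp only [smul_eq_mul] at h
  have h1 : (1 - x) / 2 * (-c) + (1 + x) / 2 * c = c * x := by ring
  rw [h1] at h
  rw [Real.cosh_eq, Real.sinh_eq]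
  calc Real.exp (c * x) ≤ (1 - x) / 2 * Real.exp (-c) + (1 + x) / 2 * Real.exp c := h
    _ = (Real.exp c + Real.exp (-c)) / 2 + x * ((Real.exp c - Real.exp (-c)) / 2) := by ring

theorem stmt9 {Ω : Type*} [MeasureSpace Ω] [IsProbabilityMeasure (ℙ : Measure Ω)]
    (n : ℕ) (X : Fin n → Ω → ℝ) (hmeas : ∀ i, Measurable (X i))
    (hbdd : ∀ i ω, X i ω ∈ Set.Icc (0 : ℝ) 1)
    (hindep : iIndepFun X ℙ)
    (μ : Fin n → ℝ) (hμ : ∀ i, μ i = ∫ ω, X i ω)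
    (m : ℕ) (Ys : Fin m → Ω → ℝ) (hYs : ∀ t, Measurable (Ys t))
    (hYindep : iIndepFun Ys ℙ)
    (hYid : ∀ t, IdentDistrib (Ys t) (fun ω => ∑ i, (X i ω - μ i)) ℙ ℙ) :
    (∫ ω, max 0 (⨆ t, Ys t ω)) ≤ 4 * Real.sqrt (n * Real.log (m + 1)) := by
  have hrhs0 : (0 : ℝ) ≤ 4 * Real.sqrt (n * Real.log (m + 1)) := by positivity
  -- dispose of the case m = 0
  rcases Nat.eq_zero_or_pos m with hm0 | hm
  · subst hm0
    simp only [Real.iSup_of_isEmpty, max_self, integral_zero]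
    exact hrhs0
  have : Nonempty (Fin m) := Fin.pos_iff_nonempty.mp hm
  set Y : Ω → ℝ := fun ω => ∑ i, (X i ω - μ i) with hYdef
  have hYmeas : Measurable Y := by
    apply Finset.measurable_sum
    exact fun i _ => (hmeas i).sub measurable_const
  -- basic facts about X and μ
  have hXint : ∀ i, Integrable (X i) ℙ := by
    intro i
    refine (integrable_const (1 : ℝ)).mono' (hmeas i).aestronglyMeasurable ?_
    filter_upwards with ω
    rw [Real.norm_eq_abs, abs_le]
    exact ⟨by linarith [(hbdd i ω).1], (hbdd i ω).2⟩
  have hμmem : ∀ i, μ i ∈ Set.Icc (0 : ℝ) 1 := by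
    intro i
    rw [hμ i]
    constructor
    · exact integral_nonneg fun ω => (hbdd i ω).1
    · calc ∫ ω, X i ω ≤ ∫ _ : Ω, (1 : ℝ) :=
            integral_mono (hXint i) (integrable_const 1) fun ω => (hbdd i ω).2
        _ = 1 := by simp
  have hXc : ∀ i ω, X i ω - μ i ∈ Set.Icc (-1 : ℝ) 1 := by
    intro i ω
    constructor
    · linarith [(hbdd i ω).1, (hμmem i).2]
    · linarith [(hbdd i ω).2, (hμmem i).1]
  have hYbdd : ∀ ω, |Y ω| ≤ n := by
    intro ω
    calc |Y ω| ≤ ∑ i, |X i ω - μ i| := Finset.abs_sum_le_sum_abs _ _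
      _ ≤ ∑ _i : Fin n, (1 : ℝ) := by
          apply Finset.sum_le_sum
          intro i _
          rw [abs_le]
          exact ⟨(hXc i ω).1, (hXc i ω).2⟩
      _ = n := by simp
  -- case n = 0 : all the Ys are a.e. zero
  rcases Nat.eq_zero_or_pos n with hn0 | hn
  · subst hn0
    have hY0 : Y = fun _ => (0 : ℝ) := by
      funext ω; simp [hYdef]
    have hzero : ∀ t, Ys t =ᵐ[ℙ] (fun _ => (0 : ℝ)) := by
      intro t
      have h0 : IdentDistrib (Ys t) (fun _ => (0 : ℝ)) ℙ ℙ := hY0 ▸ hYid t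
      have habs : IdentDistrib (fun ω => |Ys t ω|) (fun _ => |(0 : ℝ)|) ℙ ℙ :=
        h0.comp (measurable_id.abs (α := ℝ))
      have hint : Integrable (fun ω => |Ys t ω|) ℙ :=
        habs.integrable_iff.mpr (by simp [integrable_const])
      have h0' : ∫ ω, |Ys t ω| = 0 := by
        rw [habs.integral_eq]; simp
      have := (integral_eq_zero_iff_of_nonneg (fun ω => abs_nonneg _) hint).mp h0'
      filter_upwards [this] with ω hω
      simpa [abs_eq_zero] using hω
    have hae : ∀ᵐ ω ∂ℙ, (fun ω => max 0 (⨆ t, Ys t ω)) ω = (fun _ => (0 : ℝ)) ω := by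
      have := (ae_all_iff (p := fun ω t => Ys t ω = 0)).mpr
        (fun t => by filter_upwards [hzero t] with ω h using h)
      filter_upwards [this] with ω hω
      have : (fun t => Ys t ω) = fun _ => (0 : ℝ) := funext hω
      simp [this, ciSup_const]
    rw [integral_congr_ae hae]
    simpa using hrhs0
  -- now n ≥ 1 and m ≥ 1
  set L : ℝ := Real.log (m + 1) with hLdef
  have hL2 : Real.log 2 ≤ L := by
    apply Real.log_le_log (by norm_num)
    have : (1 : ℝ) ≤ m := by exact_mod_cast hm
    linarith
  have hlog2 : (0.6931471803 : ℝ) < Real.log 2 := Real.log_two_gt_d9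
  have hL : 0 < L := by linarith
  have hnpos : (0 : ℝ) < n := by exact_mod_cast hn
  set c : ℝ := Real.sqrt (2 * L / n) with hcdef
  have hc : 0 < c := Real.sqrt_pos.mpr (by positivity)
  have hc2 : c ^ 2 = 2 * L / n := Real.sq_sqrt (by positivity)
  -- mgf of each centered X i
  set X' : Fin n → Ω → ℝ := fun i ω => X i ω - μ i with hX'def
  have hX'meas : ∀ i, Measurable (X' i) := fun i => (hmeas i).sub measurable_const
  have hX'indep : iIndepFun X' ℙ :=
    hindep.comp (fun i x => x - μ i) (fun i => measurable_id.sub measurable_const)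
  have hmgf_term : ∀ i, mgf (X' i) ℙ c ≤ Real.exp (c ^ 2 / 2) := by
    intro i
    have hint1 : Integrable (fun ω => Real.exp (c * X' i ω)) ℙ := by
      refine (integrable_const (Real.exp |c|)).mono'
        (((hX'meas i).const_mul c).exp).aestronglyMeasurable ?_
      filter_upwards with ω
      rw [Real.norm_eq_abs, abs_of_pos (Real.exp_pos _)]
      apply Real.exp_le_exp.mpr
      calc c * X' i ω ≤ |c * X' i ω| := le_abs_self _
        _ = |c| * |X' i ω| := abs_mul _ _
        _ ≤ |c| * 1 := by
            apply mul_le_mul_of_nonneg_left _ (abs_nonneg _)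
            rw [abs_le]; exact ⟨(hXc i ω).1, (hXc i ω).2⟩
        _ = |c| := mul_one _
    have hint3 : Integrable (fun ω => X' i ω * Real.sinh c) ℙ :=
      ((hXint i).sub (integrable_const _)).mul_const _
    have hint2 : Integrable (fun ω => Real.cosh c + X' i ω * Real.sinh c) ℙ :=
      (integrable_const _).add hint3
    have hEX' : ∫ ω, X' i ω = 0 := by
      rw [hX'def]
      simp only []
      rw [integral_sub (hXint i) (integrable_const _), integral_const]
      simp [hμ i]
    calc mgf (X' i) ℙ c = ∫ ω, Real.exp (c * X' i ω) := rfl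
      _ ≤ ∫ ω, (Real.cosh c + X' i ω * Real.sinh c) := by
          apply integral_mono hint1 hint2
          intro ω
          exact aux_exp_le_cosh c (X' i ω) (hXc i ω)
      _ = Real.cosh c + (∫ ω, X' i ω) * Real.sinh c := by
          rw [integral_add (integrable_const _) hint3, integral_const, integral_mul_const]
          simp
      _ = Real.cosh c := by rw [hEX']; ring
      _ ≤ Real.exp (c ^ 2 / 2) := Real.cosh_le_exp_half_sq c
  -- mgf of Y
  have hYsum : Y = ∑ i, X' i := by
    funext ω; simp [hYdef, hX'def, Finset.sum_apply]
  have hmgfY : mgf Y ℙ c ≤ Real.exp (c ^ 2 * n / 2) := by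
    rw [hYsum, hX'indep.mgf_sum hX'meas]
    calc ∏ i : Fin n, mgf (X' i) ℙ c ≤ ∏ _i : Fin n, Real.exp (c ^ 2 / 2) :=
          Finset.prod_le_prod (fun i _ => mgf_nonneg) (fun i _ => hmgf_term i)
      _ = Real.exp (c ^ 2 / 2) ^ n := by simp
      _ = Real.exp (c ^ 2 * n / 2) := by
          rw [← Real.exp_nat_mul]; ring_nf
  -- exp moments of the Ys
  have hexpYint : Integrable (fun ω => Real.exp (c * Y ω)) ℙ := by
    refine (integrable_const (Real.exp (c * n))).mono'
      ((hYmeas.const_mul c).exp).aestronglyMeasurable ?_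
    filter_upwards with ω
    rw [Real.norm_eq_abs, abs_of_pos (Real.exp_pos _)]
    apply Real.exp_le_exp.mpr
    apply mul_le_mul_of_nonneg_left _ hc.le
    exact (abs_le.mp (hYbdd ω)).2
  have hid : ∀ t, IdentDistrib (fun ω => Real.exp (c * Ys t ω))
      (fun ω => Real.exp (c * Y ω)) ℙ ℙ :=
    fun t => (hYid t).comp (measurable_exp.comp (measurable_const_mul c))
  have hYsint : ∀ t, Integrable (fun ω => Real.exp (c * Ys t ω)) ℙ :=
    fun t => (hid t).integrable_iff.mpr hexpYint
  have hYsval : ∀ t, ∫ ω, Real.exp (c * Ys t ω) ≤ Real.exp (c ^ 2 * n / 2) := by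
    intro t
    calc ∫ ω, Real.exp (c * Ys t ω) = ∫ ω, Real.exp (c * Y ω) := (hid t).integral_eq
      _ = mgf Y ℙ c := rfl
      _ ≤ Real.exp (c ^ 2 * n / 2) := hmgfY
  -- the max variable
  set Z : Ω → ℝ := fun ω => max 0 (⨆ t, Ys t ω) with hZdef
  have hZmeas : Measurable Z := measurable_const.max (Measurable.iSup hYs)
  have hZnonneg : ∀ ω, 0 ≤ Z ω := fun ω => le_max_left _ _
  have hkey : ∀ ω, Real.exp (c * Z ω) ≤ 1 + ∑ t, Real.exp (c * Ys t ω) := by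
    intro ω
    have hsumnn : (0 : ℝ) ≤ ∑ t, Real.exp (c * Ys t ω) :=
      Finset.sum_nonneg fun t _ => (Real.exp_pos _).le
    rcases le_total (⨆ t, Ys t ω) 0 with h | h
    · have : Z ω = 0 := max_eq_left h
      rw [this, mul_zero, Real.exp_zero]
      linarith
    · have hZ : Z ω = ⨆ t, Ys t ω := max_eq_right h
      obtain ⟨t₀, ht₀⟩ := Finite.exists_max (fun t => Ys t ω)
      have hsup : (⨆ t, Ys t ω) ≤ Ys t₀ ω := ciSup_le ht₀
      calc Real.exp (c * Z ω) ≤ Real.exp (c * Ys t₀ ω) := by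
            apply Real.exp_le_exp.mpr
            apply mul_le_mul_of_nonneg_left _ hc.le
            rw [hZ]; exact hsup
        _ ≤ ∑ t, Real.exp (c * Ys t ω) :=
            Finset.single_le_sum (f := fun t => Real.exp (c * Ys t ω))
              (fun t _ => (Real.exp_pos _).le) (Finset.mem_univ t₀)
        _ ≤ 1 + ∑ t, Real.exp (c * Ys t ω) := by linarith
  have hgint : Integrable (fun ω => 1 + ∑ t, Real.exp (c * Ys t ω)) ℙ :=
    (integrable_const 1).add (integrable_finset_sum _ fun t _ => hYsint t)
  have hexpZint : Integrable (fun ω => Real.exp (c * Z ω)) ℙ := by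
    refine hgint.mono' ((hZmeas.const_mul c).exp).aestronglyMeasurable ?_
    filter_upwards with ω
    rw [Real.norm_eq_abs, abs_of_pos (Real.exp_pos _)]
    exact hkey ω
  have hexpZval : ∫ ω, Real.exp (c * Z ω) ≤ (m + 1) * Real.exp (c ^ 2 * n / 2) := by
    have hB1 : (1 : ℝ) ≤ Real.exp (c ^ 2 * n / 2) := Real.one_le_exp (by positivity)
    calc ∫ ω, Real.exp (c * Z ω) ≤ ∫ ω, (1 + ∑ t, Real.exp (c * Ys t ω)) :=
          integral_mono hexpZint hgint hkey
      _ = 1 + ∑ t, ∫ ω, Real.exp (c * Ys t ω) := by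
          rw [integral_add (integrable_const 1) (integrable_finset_sum _ fun t _ => hYsint t),
            integral_const, integral_finset_sum _ fun t _ => hYsint t]
          simp
      _ ≤ 1 + ∑ _t : Fin m, Real.exp (c ^ 2 * n / 2) := by
          have := Finset.sum_le_sum (fun t (_ : t ∈ Finset.univ) => hYsval t)
          linarith
      _ = 1 + m * Real.exp (c ^ 2 * n / 2) := by
          simp [Finset.sum_const, nsmul_eq_mul]
      _ ≤ (m + 1) * Real.exp (c ^ 2 * n / 2) := by nlinarith [Nat.cast_nonneg (α := ℝ) m]
  -- Z is integrable
  have hZle : ∀ ω, Z ω ≤ Real.exp (c * Z ω) / c := by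
    intro ω
    rw [le_div_iff₀ hc, mul_comm]
    have := Real.add_one_le_exp (c * Z ω)
    linarith
  have hZint : Integrable Z ℙ := by
    refine (hexpZint.div_const c).mono' hZmeas.aestronglyMeasurable ?_
    filter_upwards with ω
    rw [Real.norm_eq_abs, abs_of_nonneg (hZnonneg ω)]
    exact hZle ω
  -- the main estimate
  set a : ℝ := (L + c ^ 2 * n / 2) / c with hadef
  have hca : c * a = L + c ^ 2 * n / 2 := by
    rw [hadef]; field_simp
  have hexpL : Real.exp L = m + 1 := by
    rw [hLdef, Real.exp_log (by positivity)]
  have hptwise : ∀ ω, Z ω ≤ a + Real.exp (c * Z ω) * (Real.exp (-(c * a)) / c) := by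
    intro ω
    have h1 : c * (Z ω - a) ≤ Real.exp (c * (Z ω - a)) := by
      have := Real.add_one_le_exp (c * (Z ω - a))
      linarith
    have h2 : Real.exp (c * (Z ω - a)) = Real.exp (c * Z ω) * Real.exp (-(c * a)) := by
      rw [← Real.exp_add]; ring_nf
    have h3 : Z ω - a ≤ Real.exp (c * Z ω) * Real.exp (-(c * a)) / c := by
      rw [le_div_iff₀ hc]
      calc (Z ω - a) * c = c * (Z ω - a) := by ring
        _ ≤ Real.exp (c * (Z ω - a)) := h1
        _ = Real.exp (c * Z ω) * Real.exp (-(c * a)) := h2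
    have : Real.exp (c * Z ω) * Real.exp (-(c * a)) / c
        = Real.exp (c * Z ω) * (Real.exp (-(c * a)) / c) := by ring
    linarith [this ▸ h3]
  have hmain : ∫ ω, Z ω ≤ a + 1 / c := by
    have hrint : Integrable (fun ω => a + Real.exp (c * Z ω) * (Real.exp (-(c * a)) / c)) ℙ :=
      (integrable_const a).add (hexpZint.mul_const _)
    calc ∫ ω, Z ω ≤ ∫ ω, (a + Real.exp (c * Z ω) * (Real.exp (-(c * a)) / c)) :=
          integral_mono hZint hrint hptwise
      _ = a + (∫ ω, Real.exp (c * Z ω)) * (Real.exp (-(c * a)) / c) := by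
          rw [integral_add (integrable_const a) (hexpZint.mul_const _), integral_const,
            integral_mul_const]
          simp
      _ ≤ a + ((m + 1) * Real.exp (c ^ 2 * n / 2)) * (Real.exp (-(c * a)) / c) := by
          have hpos : 0 ≤ Real.exp (-(c * a)) / c := by positivity
          nlinarith [hexpZval]
      _ = a + 1 / c := by
          congr 1
          rw [hca, neg_add, Real.exp_add, ← hexpL, Real.exp_neg, Real.exp_neg]
          field_simp
  -- final arithmetic
  have htotal : a + 1 / c = (2 * L + 1) / c := by
    rw [hadef, hc2]
    field_simp
    ring
  have hcs : c * Real.sqrt (n * L) = Real.sqrt 2 * L := by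
    rw [hcdef, ← Real.sqrt_mul (by positivity)]
    have : 2 * L / n * (n * L) = 2 * L ^ 2 := by field_simp
    rw [this, Real.sqrt_mul (by norm_num), Real.sqrt_sq hL.le]
  have hsqrt2 : (1.4 : ℝ) ≤ Real.sqrt 2 := by
    rw [show (1.4 : ℝ) = Real.sqrt (1.96) by
        rw [show (1.96 : ℝ) = 1.4 ^ 2 by norm_num, Real.sqrt_sq (by norm_num)]]
    exact Real.sqrt_le_sqrt (by norm_num)
  have hfin : (2 * L + 1) / c ≤ 4 * Real.sqrt (n * L) := by
    rw [div_le_iff₀ hc]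
    have h1 : 4 * Real.sqrt (n * L) * c = 4 * (Real.sqrt 2 * L) := by
      rw [← hcs]; ring
    rw [h1]
    have h2 := mul_le_mul_of_nonneg_right hsqrt2 hL.le
    linarith
  calc (∫ ω, max 0 (⨆ t, Ys t ω)) = ∫ ω, Z ω := rfl
    _ ≤ a + 1 / c := hmain
    _ = (2 * L + 1) / c := htotal
    _ ≤ 4 * Real.sqrt (n * L) := hfin
end
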